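/- Let F be a universally complete Riesz space with weak order unit e taken as the algebraic unit of its f-algebra structure. The canonical partial inverse of any g in F (i.e., a partial inverse h of g lying in the band generated by |g|) is unique, and g is in turn the canonical partial inverse of h. Moreover, if g is positive then its canonical partial inverse is positive. -/

import Mathlib

/-!
`F` is a universally complete Riesz space with weak order unit `e`, equipped with
its `f`-algebra structure in which `e = 1` is the multiplicative unit.
Universal completeness = Dedekind completeness (the lattice is conditionally
complete) together with lateral completeness.  The band projection `P_{|g|} e`
of the weak order unit onto the band generated by `|g|` is computed by the
standard formula `P_{|g|} e = sup_n (n|g| ⊓ e)`.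
-/

variable {F : Type*} [CommRing F] [ConditionallyCompleteLattice F]

/-- The element `P_{|g|} e`, where `P_{|g|}` is the band projection onto the band
generated by `|g|` and `e = 1` is the weak order unit. -/
def bandUnitPart (g : F) : F := ⨆ n : ℕ, ((n • |g|) ⊓ 1)

/-- A band: an order-closed solid subspace. -/
def IsBand (B : Set F) : Prop :=
  (0 ∈ B) ∧ (∀ x ∈ B, ∀ y ∈ B, x + y ∈ B) ∧ (∀ x ∈ B, ∀ y : F, |y| ≤ |x| → y ∈ B) ∧
  (∀ S : Set F, S ⊆ B → ∀ a : F, IsLUB S a → a ∈ B)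

/-- The band generated by `g`. -/
def bandGen (g : F) : Set F := ⋂₀ {B : Set F | IsBand B ∧ g ∈ B}

/-- `h` is the canonical partial inverse of `g`: a partial inverse
(`g h = h g = P_{|g|} e`) lying in the band generated by `|g|`. -/
def IsCanonPartialInverse (g h : F) : Prop :=
  h ∈ bandGen |g| ∧ g * h = bandUnitPart g ∧ h * g = bandUnitPart g

section Helpers

private lemma cpi_absdef (a : F) : |a| = a ⊔ -a := rfl

private def cpiL (hadd : ∀ a b c : F, a ≤ b → a + c ≤ b + c) : AddLeftMono F :=
  ⟨fun c a b h => by simpa [add_comm] using hadd a b c h⟩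

private def cpiR (hadd : ∀ a b c : F, a ≤ b → a + c ≤ b + c) : AddRightMono F :=
  ⟨fun c a b h => hadd a b c h⟩

private lemma cpi_abs_of_nonneg (hadd : ∀ a b c : F, a ≤ b → a + c ≤ b + c)
    {a : F} (h : 0 ≤ a) : |a| = a := by
  haveI := cpiL hadd; haveI := cpiR hadd
  have hn : -a ≤ a := le_trans (by simpa using neg_le_neg_iff.2 h) h
  rw [cpi_absdef]; exact sup_eq_left.2 hn

private lemma cpi_dpz (hfAlg : ∀ a b c : F, a ⊓ b = 0 → 0 ≤ c → (c * a) ⊓ b = 0)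
    {a b : F} (hab : a ⊓ b = 0) : a * b = 0 := by
  have ha : 0 ≤ a := by rw [← hab]; exact inf_le_left
  have hb : 0 ≤ b := by rw [← hab]; exact inf_le_right
  have h1 := hfAlg a b b hab hb
  rw [mul_comm, inf_comm] at h1
  have h2 := hfAlg b (a * b) a h1 ha
  simpa using h2

private lemma cpi_sq_nonneg (hadd : ∀ a b c : F, a ≤ b → a + c ≤ b + c)
    (hmulPos : ∀ a b : F, 0 ≤ a → 0 ≤ b → 0 ≤ a * b)
    (hfAlg : ∀ a b c : F, a ⊓ b = 0 → 0 ≤ c → (c * a) ⊓ b = 0)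
    (x : F) : 0 ≤ x * x := by
  haveI := cpiL hadd; haveI := cpiR hadd
  have h0 : x⁺ * x⁻ = 0 := cpi_dpz hfAlg (posPart_inf_negPart_eq_zero x)
  have hx := posPart_sub_negPart x
  have key : x * x = x⁺ * x⁺ + x⁻ * x⁻ := by
    linear_combination (x + x⁺ - x⁻) * hx.symm - 2 * h0
  rw [key]
  have h1 := hmulPos _ _ (posPart_nonneg x) (posPart_nonneg x)
  have h2 := hmulPos _ _ (negPart_nonneg x) (negPart_nonneg x)
  calc (0:F) = 0 + 0 := by ring
  _ ≤ _ := add_le_add h1 h2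

private lemma cpi_one_nonneg (hadd : ∀ a b c : F, a ≤ b → a + c ≤ b + c)
    (hmulPos : ∀ a b : F, 0 ≤ a → 0 ≤ b → 0 ≤ a * b)
    (hfAlg : ∀ a b c : F, a ⊓ b = 0 → 0 ≤ c → (c * a) ⊓ b = 0) : (0:F) ≤ 1 := by
  simpa using cpi_sq_nonneg hadd hmulPos hfAlg 1

private lemma cpi_nsmul_nonneg (hadd : ∀ a b c : F, a ≤ b → a + c ≤ b + c)
    {a : F} (h : 0 ≤ a) : ∀ n : ℕ, 0 ≤ n • a := by
  haveI := cpiL hadd; haveI := cpiR hadd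
  intro n
  induction n with
  | zero => rw [zero_nsmul]
  | succ n ih => rw [succ_nsmul]; exact add_nonneg ih h

private lemma cpi_nsmul_le (hadd : ∀ a b c : F, a ≤ b → a + c ≤ b + c)
    {a b : F} (h : a ≤ b) : ∀ n : ℕ, n • a ≤ n • b := by
  haveI := cpiL hadd; haveI := cpiR hadd
  intro n
  induction n with
  | zero => rw [zero_nsmul, zero_nsmul]
  | succ n ih => rw [succ_nsmul, succ_nsmul]; exact add_le_add ih h

private lemma cpi_riesz (hadd : ∀ a b c : F, a ≤ b → a + c ≤ b + c)
    {a b c : F} (ha : 0 ≤ a) (hb : 0 ≤ b) (hc : 0 ≤ c) :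
    (a + b) ⊓ c ≤ a ⊓ c + b ⊓ c := by
  haveI := cpiL hadd; haveI := cpiR hadd
  have e1 : a ⊓ c + b ⊓ c = ((a + b) ⊓ (c + b)) ⊓ ((a + c) ⊓ (c + c)) := by
    rw [add_inf b c (a ⊓ c), inf_add a c b, inf_add a c c]
  rw [e1]
  have hcb : c ≤ c + b := by simpa [add_comm] using hadd 0 b c hb
  have hac : c ≤ a + c := by simpa using hadd 0 a c ha
  have hcc : c ≤ c + c := by simpa using hadd 0 c c hc
  exact le_inf (le_inf inf_le_left (inf_le_right.trans hcb))
    (le_inf (inf_le_right.trans hac) (inf_le_right.trans hcc))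

private lemma cpi_disj_nsmul (hadd : ∀ a b c : F, a ≤ b → a + c ≤ b + c)
    {a c : F} (ha : 0 ≤ a) (hc : 0 ≤ c) (h : a ⊓ c = 0) :
    ∀ n : ℕ, (n • a) ⊓ c = 0 := by
  intro n
  induction n with
  | zero => rw [zero_nsmul]; exact inf_eq_left.2 hc
  | succ n ih =>
    refine le_antisymm ?_ (le_inf (cpi_nsmul_nonneg hadd ha _) hc)
    rw [succ_nsmul]
    calc (n • a + a) ⊓ c ≤ (n • a) ⊓ c + a ⊓ c :=
          cpi_riesz hadd (cpi_nsmul_nonneg hadd ha n) ha hc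
    _ = 0 := by rw [ih, h, add_zero]

private lemma cpi_arch (hadd : ∀ a b c : F, a ≤ b → a + c ≤ b + c)
    {d y : F} (h : ∀ n : ℕ, n • d ≤ y) : d ≤ 0 := by
  haveI := cpiL hadd; haveI := cpiR hadd
  have bdd : BddAbove (Set.range fun n : ℕ => n • d) := ⟨y, by rintro _ ⟨n, rfl⟩; exact h n⟩
  set s := ⨆ n : ℕ, n • d with hs
  have h1 : ∀ n : ℕ, n • d ≤ s - d := by
    intro n
    have h2 : n • d + d ≤ s := by
      rw [← succ_nsmul]; exact le_ciSup bdd (n + 1)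
    exact le_sub_iff_add_le.2 h2
  have h3 : s ≤ s - d := ciSup_le h1
  have h4 : s + d ≤ s := le_sub_iff_add_le.1 h3
  exact (add_le_iff_nonpos_right _).1 h4

private lemma cpi_bdd (g : F) : BddAbove (Set.range fun n : ℕ => (n • |g|) ⊓ 1) :=
  ⟨1, by rintro _ ⟨n, rfl⟩; exact inf_le_right⟩

private lemma cpi_p_def (g : F) : bandUnitPart g = ⨆ n : ℕ, ((n • |g|) ⊓ 1) := rfl

private lemma cpi_p_le_one (g : F) : bandUnitPart g ≤ 1 := by
  rw [cpi_p_def]; exact ciSup_le fun n => inf_le_right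

private lemma cpi_term_le_p (g : F) (n : ℕ) : (n • |g|) ⊓ 1 ≤ bandUnitPart g := by
  rw [cpi_p_def]; exact le_ciSup (cpi_bdd g) n

private lemma cpi_p_nonneg (hadd : ∀ a b c : F, a ≤ b → a + c ≤ b + c)
    (hmulPos : ∀ a b : F, 0 ≤ a → 0 ≤ b → 0 ≤ a * b)
    (hfAlg : ∀ a b c : F, a ⊓ b = 0 → 0 ≤ c → (c * a) ⊓ b = 0)
    (g : F) : 0 ≤ bandUnitPart g := by
  have h0 : ((0:ℕ) • |g|) ⊓ 1 = 0 := by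
    rw [zero_nsmul]; exact inf_eq_left.2 (cpi_one_nonneg hadd hmulPos hfAlg)
  calc (0:F) = ((0:ℕ) • |g|) ⊓ 1 := h0.symm
  _ ≤ bandUnitPart g := cpi_term_le_p g 0

private lemma cpi_q_perp (hadd : ∀ a b c : F, a ≤ b → a + c ≤ b + c)
    (hmulPos : ∀ a b : F, 0 ≤ a → 0 ≤ b → 0 ≤ a * b)
    (hfAlg : ∀ a b c : F, a ⊓ b = 0 → 0 ≤ c → (c * a) ⊓ b = 0)
    (g : F) : (1 - bandUnitPart g) ⊓ |g| = 0 := by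
  haveI := cpiL hadd; haveI := cpiR hadd
  have hq0 : 0 ≤ 1 - bandUnitPart g := sub_nonneg.2 (cpi_p_le_one g)
  set d := (1 - bandUnitPart g) ⊓ |g| with hd
  have hd0 : 0 ≤ d := le_inf hq0 (abs_nonneg g)
  have key : ∀ n : ℕ, n • d ≤ 1 := by
    intro n
    induction n with
    | zero => rw [zero_nsmul]; exact cpi_one_nonneg hadd hmulPos hfAlg
    | succ n ih =>
      have h1 : (n • d) ⊓ 1 = n • d := inf_eq_left.2 ih
      have h2 : n • d ≤ n • |g| := cpi_nsmul_le hadd inf_le_right n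
      have h3 : (n • d) ⊓ 1 ≤ (n • |g|) ⊓ 1 := inf_le_inf_right 1 h2
      have h4 : (n • |g|) ⊓ 1 ≤ bandUnitPart g := cpi_term_le_p g n
      have h6 : 1 - bandUnitPart g ≤ 1 - n • d := by
        rw [← h1]; exact sub_le_sub_left (h3.trans h4) 1
      have h7 : d ≤ 1 - n • d := inf_le_left.trans h6
      have h8 : d + n • d ≤ 1 := le_sub_iff_add_le.1 h7
      rw [succ_nsmul]
      calc n • d + d = d + n • d := by ring
      _ ≤ 1 := h8
  exact le_antisymm (cpi_arch hadd key) hd0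

private lemma cpi_perp_isBand (hadd : ∀ a b c : F, a ≤ b → a + c ≤ b + c)
    {w : F} (hw : 0 ≤ w) : IsBand {y : F | |y| ⊓ w = 0} := by
  haveI := cpiL hadd; haveI := cpiR hadd
  refine ⟨?_, ?_, ?_, ?_⟩
  · show |(0:F)| ⊓ w = 0
    rw [abs_zero]; exact inf_eq_left.2 hw
  · intro x hx y hy
    have hx' : |x| ⊓ w = 0 := hx
    have hy' : |y| ⊓ w = 0 := hy
    show |x + y| ⊓ w = 0
    have habs2 : |x + y| ≤ |x| + |y| := abs_add_le x y
    have h1 : |x + y| ⊓ w ≤ (|x| + |y|) ⊓ w := inf_le_inf_right w habs2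
    have h2 : (|x| + |y|) ⊓ w ≤ |x| ⊓ w + |y| ⊓ w :=
      cpi_riesz hadd (abs_nonneg x) (abs_nonneg y) hw
    rw [hx', hy', add_zero] at h2
    exact le_antisymm (h1.trans h2) (le_inf (abs_nonneg _) hw)
  · intro x hx y hy
    have hx' : |x| ⊓ w = 0 := hx
    show |y| ⊓ w = 0
    exact le_antisymm ((inf_le_inf_right w hy).trans_eq hx') (le_inf (abs_nonneg _) hw)
  · intro S hS a ha
    show |a| ⊓ w = 0
    rcases S.eq_empty_or_nonempty with rfl | ⟨s₀, hs₀⟩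
    · have hbot : ∀ x : F, a ≤ x := fun x => ha.2 (fun b hb => hb.elim)
      have h0 : ∀ x : F, (0:F) ≤ x := by
        intro x
        exact (le_add_iff_nonneg_right a).1 (hbot (a + x))
      have hall : ∀ x : F, x = 0 := by
        intro x
        refine le_antisymm ?_ (h0 x)
        simpa using neg_le_neg_iff.2 (h0 (-x))
      rw [hall a, hall w, abs_zero, inf_idem]
    · have hsw : ∀ s ∈ S, s ⊓ w ≤ 0 := by
        intro s hs
        have h1 : s ⊓ w ≤ |s| ⊓ w := inf_le_inf_right w (le_abs_self s)
        exact h1.trans_eq (hS hs)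
      have haw : a ⊓ w ≤ 0 := by
        have hub : ∀ s ∈ S, s ≤ (a ⊔ w) - w := by
          intro s hs
          have e := inf_add_sup s w
          have h1 : s + w ≤ 0 + (a ⊔ w) := by
            rw [← e]; exact add_le_add (hsw s hs) (sup_le_sup_right (ha.1 hs) w)
          rw [zero_add] at h1
          exact le_sub_iff_add_le.2 h1
      -- a ≤ (a ⊔ w) - w
        have h2 : a ≤ (a ⊔ w) - w := ha.2 hub
        have h3 : a + w ≤ a ⊔ w := le_sub_iff_add_le.1 h2
        have e := inf_add_sup a w
        have h4 : a ⊓ w + (a ⊔ w) ≤ 0 + (a ⊔ w) := by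
          rw [e, zero_add]; exact h3
        exact le_of_add_le_add_right h4
      have hnaw : (-a) ⊓ w ≤ 0 := by
        have h1 : -a ≤ -s₀ := neg_le_neg_iff.2 (ha.1 hs₀)
        have h2 : (-a) ⊓ w ≤ (-s₀) ⊓ w := inf_le_inf_right w h1
        have h3 : (-s₀) ⊓ w ≤ |s₀| ⊓ w := inf_le_inf_right w (neg_le_abs s₀)
        exact (h2.trans h3).trans_eq (hS hs₀)
      have keysup : ∀ x y : F, x ⊓ w ≤ 0 → y ⊓ w ≤ 0 → (x ⊔ y) ⊓ w ≤ 0 := by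
        intro x y hx hy
        have step : ∀ z : F, z ⊓ w ≤ 0 → z + w ≤ z ⊔ w := by
          intro z hz
          have e := inf_add_sup z w
          calc z + w = z ⊓ w + (z ⊔ w) := e.symm
          _ ≤ 0 + (z ⊔ w) := add_le_add hz le_rfl
          _ = z ⊔ w := zero_add _
        have hx3 : x ≤ (x ⊔ y) ⊔ w - w :=
          le_sub_iff_add_le.2 ((step x hx).trans (sup_le_sup_right le_sup_left w))
        have hy3 : y ≤ (x ⊔ y) ⊔ w - w :=
          le_sub_iff_add_le.2 ((step y hy).trans (sup_le_sup_right le_sup_right w))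
        have h5 : (x ⊔ y) + w ≤ (x ⊔ y) ⊔ w := le_sub_iff_add_le.1 (sup_le hx3 hy3)
        have e := inf_add_sup (x ⊔ y) w
        have h7 : (x ⊔ y) ⊓ w + ((x ⊔ y) ⊔ w) ≤ 0 + ((x ⊔ y) ⊔ w) := by
          rw [e, zero_add]; exact h5
        exact le_of_add_le_add_right h7
      have habs : |a| ⊓ w ≤ 0 := by
        rw [cpi_absdef]; exact keysup a (-a) haw hnaw
      exact le_antisymm habs (le_inf (abs_nonneg a) hw)

private lemma cpi_mem_band_perp (hadd : ∀ a b c : F, a ≤ b → a + c ≤ b + c)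
    (hmulPos : ∀ a b : F, 0 ≤ a → 0 ≤ b → 0 ≤ a * b)
    (hfAlg : ∀ a b c : F, a ⊓ b = 0 → 0 ≤ c → (c * a) ⊓ b = 0)
    {g h : F} (hh : h ∈ bandGen |g|) :
    |h| ⊓ (1 - bandUnitPart g) = 0 := by
  haveI := cpiL hadd; haveI := cpiR hadd
  have hq0 : 0 ≤ 1 - bandUnitPart g := sub_nonneg.2 (cpi_p_le_one g)
  have hband := cpi_perp_isBand hadd hq0
  have hgmem : |g| ∈ {y : F | |y| ⊓ (1 - bandUnitPart g) = 0} := by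
    show |(|g|)| ⊓ (1 - bandUnitPart g) = 0
    rw [abs_abs, inf_comm]
    exact cpi_q_perp hadd hmulPos hfAlg g
  exact Set.mem_sInter.1 hh _ ⟨hband, hgmem⟩

private lemma cpi_posPart_le_abs (hadd : ∀ a b c : F, a ≤ b → a + c ≤ b + c)
    (h : F) : h⁺ ≤ |h| := by
  haveI := cpiL hadd; haveI := cpiR hadd
  rw [← posPart_add_negPart h]
  exact (le_add_iff_nonneg_right _).2 (negPart_nonneg h)

private lemma cpi_negPart_le_abs (hadd : ∀ a b c : F, a ≤ b → a + c ≤ b + c)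
    (h : F) : h⁻ ≤ |h| := by
  haveI := cpiL hadd; haveI := cpiR hadd
  rw [← posPart_add_negPart h]
  simpa using hadd 0 (h⁺) (h⁻) (posPart_nonneg h)

private lemma cpi_band_mul (hadd : ∀ a b c : F, a ≤ b → a + c ≤ b + c)
    (hmulPos : ∀ a b : F, 0 ≤ a → 0 ≤ b → 0 ≤ a * b)
    (hfAlg : ∀ a b c : F, a ⊓ b = 0 → 0 ≤ c → (c * a) ⊓ b = 0)
    {g h : F} (hh : h ∈ bandGen |g|) :
    bandUnitPart g * h = h := by
  haveI := cpiL hadd; haveI := cpiR hadd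
  set q := 1 - bandUnitPart g with hq
  have hperp : |h| ⊓ q = 0 := cpi_mem_band_perp hadd hmulPos hfAlg hh
  have hq0 : 0 ≤ q := sub_nonneg.2 (cpi_p_le_one g)
  have hp : ∀ z : F, 0 ≤ z → z ≤ |h| → z * q = 0 := by
    intro z hz hzle
    apply cpi_dpz hfAlg
    exact le_antisymm ((inf_le_inf_right q hzle).trans_eq hperp) (le_inf hz hq0)
  have hplus : h⁺ * q = 0 := hp _ (posPart_nonneg h) (cpi_posPart_le_abs hadd h)
  have hminus : h⁻ * q = 0 := hp _ (negPart_nonneg h) (cpi_negPart_le_abs hadd h)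
  have hqh : q * h = 0 := by
    have e : q * h = h⁺ * q - h⁻ * q := by
      have := posPart_sub_negPart h
      linear_combination q * this.symm
    rw [e, hplus, hminus, sub_zero]
  have e : bandUnitPart g * h = h - q * h := by rw [hq]; ring
  rw [e, hqh, sub_zero]

private lemma cpi_mul_le_abs_mul (hadd : ∀ a b c : F, a ≤ b → a + c ≤ b + c)
    (hmulPos : ∀ a b : F, 0 ≤ a → 0 ≤ b → 0 ≤ a * b)
    (x y : F) : x * y ≤ |x| * |y| := by
  haveI := cpiL hadd; haveI := cpiR hadd
  have hx := posPart_sub_negPart x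
  have hy := posPart_sub_negPart y
  have hX := posPart_add_negPart x
  have hY := posPart_add_negPart y
  have e1 : |x| * |y| - x * y = 2 * (x⁺ * y⁻) + 2 * (x⁻ * y⁺) := by
    linear_combination (-|y|) * hX - (x⁺ + x⁻) * hY + y * hx + (x⁺ - x⁻) * hy
  have h1 := hmulPos _ _ (posPart_nonneg x) (negPart_nonneg y)
  have h2 := hmulPos _ _ (negPart_nonneg x) (posPart_nonneg y)
  have h3 : 0 ≤ |x| * |y| - x * y := by
    rw [e1, two_mul, two_mul]
    exact add_nonneg (add_nonneg h1 h1) (add_nonneg h2 h2)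
  exact sub_nonneg.1 h3

private lemma cpi_abs_mul_le (hadd : ∀ a b c : F, a ≤ b → a + c ≤ b + c)
    (hmulPos : ∀ a b : F, 0 ≤ a → 0 ≤ b → 0 ≤ a * b)
    (a b : F) : |a * b| ≤ |a| * |b| := by
  haveI := cpiL hadd; haveI := cpiR hadd
  rw [cpi_absdef (a * b)]
  refine sup_le (cpi_mul_le_abs_mul hadd hmulPos a b) ?_
  have h1 : (-a) * b ≤ |(-a)| * |b| := cpi_mul_le_abs_mul hadd hmulPos (-a) b
  rw [abs_neg] at h1
  calc -(a * b) = (-a) * b := by ring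
  _ ≤ |a| * |b| := h1

private lemma cpi_le_p (hadd : ∀ a b c : F, a ≤ b → a + c ≤ b + c)
    (hmulPos : ∀ a b : F, 0 ≤ a → 0 ≤ b → 0 ≤ a * b)
    (hfAlg : ∀ a b c : F, a ⊓ b = 0 → 0 ≤ c → (c * a) ⊓ b = 0)
    (g' : F) {a : F} (ha0 : 0 ≤ a) (ha1 : a ≤ 1)
    (hperp : a ⊓ (1 - bandUnitPart g') = 0) : a ≤ bandUnitPart g' := by
  haveI := cpiL hadd; haveI := cpiR hadd
  have hp0 : 0 ≤ bandUnitPart g' := cpi_p_nonneg hadd hmulPos hfAlg g'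
  have hq0 : 0 ≤ 1 - bandUnitPart g' := sub_nonneg.2 (cpi_p_le_one g')
  have hsum : bandUnitPart g' + (1 - bandUnitPart g') = 1 := by ring
  have h1 : a ⊓ (bandUnitPart g' + (1 - bandUnitPart g')) = a := by
    rw [hsum]; exact inf_eq_left.2 ha1
  have h2 : (bandUnitPart g' + (1 - bandUnitPart g')) ⊓ a ≤
      bandUnitPart g' ⊓ a + (1 - bandUnitPart g') ⊓ a := cpi_riesz hadd hp0 hq0 ha0
  calc a = (bandUnitPart g' + (1 - bandUnitPart g')) ⊓ a := by rw [inf_comm]; exact h1.symm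
  _ ≤ bandUnitPart g' ⊓ a + (1 - bandUnitPart g') ⊓ a := h2
  _ = bandUnitPart g' ⊓ a + 0 := by rw [inf_comm (1 - bandUnitPart g') a, hperp]
  _ = bandUnitPart g' ⊓ a := add_zero _
  _ ≤ bandUnitPart g' := inf_le_left

private lemma cpi_mem_bandGen_of_le (hadd : ∀ a b c : F, a ≤ b → a + c ≤ b + c)
    (hmulPos : ∀ a b : F, 0 ≤ a → 0 ≤ b → 0 ≤ a * b)
    (hfAlg : ∀ a b c : F, a ⊓ b = 0 → 0 ≤ c → (c * a) ⊓ b = 0)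
    {u c : F} (hc : 0 ≤ c) (y : F) (hy : |y| ≤ |u| * c) : y ∈ bandGen |u| := by
  haveI := cpiL hadd; haveI := cpiR hadd
  refine Set.mem_sInter.2 fun B hB => ?_
  obtain ⟨⟨hB0, hBadd, hBsolid, hBlub⟩, hBu⟩ := hB
  set x := |u| * c with hxdef
  have hx0 : 0 ≤ x := hmulPos _ _ (abs_nonneg u) hc
  have hnu : ∀ n : ℕ, n • |u| ∈ B := by
    intro n
    induction n with
    | zero => rw [zero_nsmul]; exact hB0
    | succ n ih => rw [succ_nsmul]; exact hBadd _ ih _ hBu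
  have hnu0 : ∀ n : ℕ, 0 ≤ n • |u| := cpi_nsmul_nonneg hadd (abs_nonneg u)
  have hterm0 : ∀ n : ℕ, 0 ≤ x ⊓ (n • |u|) := fun n => le_inf hx0 (hnu0 n)
  have htermB : ∀ n : ℕ, x ⊓ (n • |u|) ∈ B := by
    intro n
    refine hBsolid _ (hnu n) _ ?_
    rw [cpi_abs_of_nonneg hadd (hterm0 n), cpi_abs_of_nonneg hadd (hnu0 n)]
    exact inf_le_right
  have bdd : BddAbove (Set.range fun n : ℕ => x ⊓ (n • |u|)) :=
    ⟨x, by rintro _ ⟨n, rfl⟩; exact inf_le_left⟩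
  set s := ⨆ n : ℕ, x ⊓ (n • |u|) with hsdef
  have hsx : s ≤ x := ciSup_le fun n => inf_le_left
  have hs0 : 0 ≤ s := by
    have h0 : x ⊓ ((0:ℕ) • |u|) = 0 := by rw [zero_nsmul]; exact inf_eq_right.2 hx0
    calc (0:F) = x ⊓ ((0:ℕ) • |u|) := h0.symm
    _ ≤ s := le_ciSup bdd 0
  set r := x - s with hrdef
  have hr0 : 0 ≤ r := sub_nonneg.2 hsx
  have hrx : r ≤ x := by
    have := sub_le_sub_left hs0 x
    simpa [hrdef] using this
  have hw : r ⊓ |u| = 0 := by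
    set w := r ⊓ |u| with hwdef
    have hw0 : 0 ≤ w := le_inf hr0 (abs_nonneg u)
    have key : ∀ n : ℕ, n • w ≤ x ⊓ (n • |u|) := by
      intro n
      induction n with
      | zero =>
        rw [zero_nsmul, zero_nsmul, inf_eq_right.2 hx0]
      | succ n ih =>
        rw [succ_nsmul, succ_nsmul]
        refine le_inf ?_ ?_
        · have h1 : n • w + w ≤ x ⊓ (n • |u|) + r := add_le_add ih inf_le_left
          have h3 : x ⊓ (n • |u|) ≤ s := le_ciSup bdd n
          have h4 : x ⊓ (n • |u|) + r ≤ s + r := add_le_add h3 le_rfl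
          have h5 : s + r = x := by rw [hrdef]; ring
          exact h1.trans (h4.trans_eq h5)
        · exact add_le_add (ih.trans inf_le_right) inf_le_right
    have harch : w ≤ 0 := cpi_arch hadd (fun n => (key n).trans inf_le_left)
    exact le_antisymm harch hw0
  have hxr : x ⊓ r = 0 := by
    have h1 := hfAlg |u| r c (by rw [inf_comm]; exact hw) hc
    rw [hxdef, mul_comm]; exact h1
  have hr_eq : r = 0 := by
    have h1 : r ⊓ x = r := inf_eq_left.2 hrx
    rw [inf_comm] at hxr
    exact h1.symm.trans hxr
  have hxs : x = s := by
    have : x - s = 0 := by rw [← hrdef]; exact hr_eq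
    exact sub_eq_zero.1 this
  have hlub : IsLUB (Set.range fun n : ℕ => x ⊓ (n • |u|)) x := by
    have hl : IsLUB (Set.range fun n : ℕ => x ⊓ (n • |u|)) s := by
      rw [hsdef]; exact isLUB_ciSup bdd
    exact hxs.symm ▸ hl
  have hxB : x ∈ B := hBlub _ (by rintro _ ⟨n, rfl⟩; exact htermB n) x hlub
  refine hBsolid x hxB y ?_
  rw [cpi_abs_of_nonneg hadd hx0]
  exact hy

end Helpers

/-- The canonical partial inverse of any `g` is unique; `g` is in
turn the canonical partial inverse of its canonical partial inverse `h`; and if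
`g` is positive then so is its canonical partial inverse. -/
theorem stmt1
    -- `F` is a lattice-ordered ring which is an `f`-algebra:
    (haddLe : ∀ a b c : F, a ≤ b → a + c ≤ b + c)
    (hmulPos : ∀ a b : F, 0 ≤ a → 0 ≤ b → 0 ≤ a * b)
    (hfAlg : ∀ a b c : F, a ⊓ b = 0 → 0 ≤ c → (c * a) ⊓ b = 0)
    -- the multiplicative unit `e = 1` is a weak order unit:
    (hunit : ∀ x : F, 0 ≤ x → x ⊓ 1 = 0 → x = 0)
    -- lateral completeness (together with Dedekind completeness of the
    -- conditionally complete lattice: universal completeness):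
    (hlat : ∀ S : Set F, (∀ x ∈ S, 0 ≤ x) → S.Pairwise (fun x y => x ⊓ y = 0) → BddAbove S)
    (g : F) :
    (∀ h₁ h₂ : F, IsCanonPartialInverse g h₁ → IsCanonPartialInverse g h₂ → h₁ = h₂) ∧
    (∀ h : F, IsCanonPartialInverse g h → IsCanonPartialInverse h g) ∧
    (0 ≤ g → ∀ h : F, IsCanonPartialInverse g h → 0 ≤ h) := by
  haveI := cpiL haddLe; haveI := cpiR haddLe
  have key : ∀ y : F, y ∈ bandGen |g| → bandUnitPart g * y = y :=
    fun y hy => cpi_band_mul haddLe hmulPos hfAlg hy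
  have uniq : ∀ h₁ h₂ : F, IsCanonPartialInverse g h₁ → IsCanonPartialInverse g h₂ → h₁ = h₂ := by
    rintro h₁ h₂ ⟨m1, e1, e1'⟩ ⟨m2, e2, e2'⟩
    calc h₁ = bandUnitPart g * h₁ := (key h₁ m1).symm
    _ = (g * h₂) * h₁ := by rw [e2]
    _ = (g * h₁) * h₂ := by ring
    _ = bandUnitPart g * h₂ := by rw [e1]
    _ = h₂ := key h₂ m2
  refine ⟨uniq, ?_, ?_⟩
  · -- symmetry
    rintro h ⟨hm, he1, he2⟩
    have hsq : 0 ≤ g * g := cpi_sq_nonneg haddLe hmulPos hfAlg g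
    have hg_self : bandUnitPart g * g = g :=
      key g (cpi_mem_bandGen_of_le haddLe hmulPos hfAlg
        (cpi_one_nonneg haddLe hmulPos hfAlg) g (by rw [mul_one]))
    have hgx : g = h * (g * g) := by
      calc g = bandUnitPart g * g := hg_self.symm
      _ = (g * h) * g := by rw [he1]
      _ = h * (g * g) := by ring
    have habs : |g| ≤ |h| * (g * g) := by
      calc |g| = |h * (g * g)| := by rw [← hgx]
      _ ≤ |h| * |g * g| := cpi_abs_mul_le haddLe hmulPos h (g * g)
      _ = |h| * (g * g) := by rw [cpi_abs_of_nonneg haddLe hsq]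
    have hqh : (1 - bandUnitPart h) ⊓ |h| = 0 := cpi_q_perp haddLe hmulPos hfAlg h
    have hqh0 : 0 ≤ 1 - bandUnitPart h := sub_nonneg.2 (cpi_p_le_one h)
    have hqg0 : 0 ≤ 1 - bandUnitPart g := sub_nonneg.2 (cpi_p_le_one g)
    have hqhg : |g| ⊓ (1 - bandUnitPart h) = 0 := by
      have h1 := hfAlg |h| (1 - bandUnitPart h) (g * g) (by rw [inf_comm]; exact hqh) hsq
      refine le_antisymm ?_ (le_inf (abs_nonneg g) hqh0)
      calc |g| ⊓ (1 - bandUnitPart h) ≤ ((g * g) * |h|) ⊓ (1 - bandUnitPart h) :=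
            inf_le_inf_right _ (by rw [mul_comm]; exact habs)
      _ = 0 := h1
    have hhg : |h| ⊓ (1 - bandUnitPart g) = 0 := cpi_mem_band_perp haddLe hmulPos hfAlg hm
    have hpp : bandUnitPart h = bandUnitPart g := by
      apply le_antisymm
      · rw [cpi_p_def h]
        apply ciSup_le
        intro n
        apply cpi_le_p haddLe hmulPos hfAlg g
        · exact le_inf (cpi_nsmul_nonneg haddLe (abs_nonneg h) n)
            (cpi_one_nonneg haddLe hmulPos hfAlg)
        · exact inf_le_right
        · refine le_antisymm ?_
            (le_inf (le_inf (cpi_nsmul_nonneg haddLe (abs_nonneg h) n)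
              (cpi_one_nonneg haddLe hmulPos hfAlg)) hqg0)
          calc ((n • |h|) ⊓ 1) ⊓ (1 - bandUnitPart g) ≤ (n • |h|) ⊓ (1 - bandUnitPart g) :=
                inf_le_inf_right _ inf_le_left
          _ = 0 := cpi_disj_nsmul haddLe (abs_nonneg h) hqg0 hhg n
      · rw [cpi_p_def g]
        apply ciSup_le
        intro n
        apply cpi_le_p haddLe hmulPos hfAlg h
        · exact le_inf (cpi_nsmul_nonneg haddLe (abs_nonneg g) n)
            (cpi_one_nonneg haddLe hmulPos hfAlg)
        · exact inf_le_right
        · refine le_antisymm ?_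
            (le_inf (le_inf (cpi_nsmul_nonneg haddLe (abs_nonneg g) n)
              (cpi_one_nonneg haddLe hmulPos hfAlg)) hqh0)
          calc ((n • |g|) ⊓ 1) ⊓ (1 - bandUnitPart h) ≤ (n • |g|) ⊓ (1 - bandUnitPart h) :=
                inf_le_inf_right _ inf_le_left
          _ = 0 := cpi_disj_nsmul haddLe (abs_nonneg g) hqh0 hqhg n
    refine ⟨cpi_mem_bandGen_of_le haddLe hmulPos hfAlg hsq g habs, ?_, ?_⟩
    · rw [hpp]; exact he2
    · rw [hpp]; exact he1
  · -- positivity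
    rintro hg h ⟨hm, he1, he2⟩
    have hmneg : h⁻ ∈ bandGen |g| := by
      refine Set.mem_sInter.2 fun B hB => ?_
      refine hB.1.2.2.1 h (Set.mem_sInter.1 hm B hB) h⁻ ?_
      rw [cpi_abs_of_nonneg haddLe (negPart_nonneg h)]
      exact cpi_negPart_le_abs haddLe h
    have hgminus : g * h⁻ = 0 := by
      have hd : h⁺ ⊓ h⁻ = 0 := posPart_inf_negPart_eq_zero h
      have h1 := hfAlg h⁺ h⁻ g hd hg
      have h2 := hfAlg h⁻ (g * h⁺) g (by rw [inf_comm]; exact h1) hg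
      have h3 : g * h⁻ ≤ g * h⁺ := by
        have h4 : 0 ≤ g * h⁺ - g * h⁻ := by
          have e : g * h⁺ - g * h⁻ = bandUnitPart g := by
            rw [← he1]
            linear_combination g * (posPart_sub_negPart h)
          rw [e]; exact cpi_p_nonneg haddLe hmulPos hfAlg g
        exact sub_nonneg.1 h4
      have h5 : (g * h⁻) ⊓ (g * h⁺) = g * h⁻ := inf_eq_left.2 h3
      exact h5.symm.trans h2
    have hneg0 : h⁻ = 0 := by
      calc h⁻ = bandUnitPart g * h⁻ := (key h⁻ hmneg).symm
      _ = (h * g) * h⁻ := by rw [he2]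
      _ = h * (g * h⁻) := by ring
      _ = 0 := by rw [hgminus, mul_zero]
    calc (0:F) ≤ h⁺ := posPart_nonneg h
    _ = h⁺ - h⁻ := by rw [hneg0, sub_zero]
    _ = h := posPart_sub_negPart h
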